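/- (Reflection principle, lower bound.) Suppose i > l and j > l. If B + l ≥ j, then the number of integer grid bridges from i to j with B upward jumps that attain the value l at some index (i.e., ω k = l for some k ≤ K) equals C(K, B_l), where B_l = B + l − j. If B + l < j, then no such bridge attains the value l. -/

import Mathlib

/-- An integer grid bridge from `i` to `j` with `B` upward jumps and `D` downward
jumps. -/
def IsBridge (i j : ℤ) (B D : ℕ) (ω : Fin (B + D + 1) → ℤ) : Prop :=
  ω 0 = i ∧ ω (Fin.last (B + D)) = j ∧
    (∀ k : Fin (B + D), |ω k.succ - ω k.castSucc| = 1) ∧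
    (Finset.univ.filter (fun k : Fin (B + D) => ω k.succ = ω k.castSucc + 1)).card = B

namespace ReflAux

variable {n : ℕ} {l : ℤ}


variable {n : ℕ}

def upCnt (f : Fin n → Bool) (m : ℕ) : ℕ :=
  (Finset.univ.filter fun k : Fin n => k.val < m ∧ f k = true).card

lemma upCnt_zero (f : Fin n → Bool) : upCnt f 0 = 0 := by
  simp [upCnt]

lemma upCnt_succ (f : Fin n → Bool) (m : ℕ) (hm : m < n) :
    upCnt f (m + 1) = upCnt f m + (if f ⟨m, hm⟩ = true then 1 else 0) := by
  classical
  unfold upCnt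
  have hset : (Finset.univ.filter fun k : Fin n => k.val < m + 1 ∧ f k = true)
      = (Finset.univ.filter fun k : Fin n => k.val < m ∧ f k = true) ∪
        (Finset.univ.filter fun k : Fin n => k = ⟨m, hm⟩ ∧ f k = true) := by
    ext k
    simp only [Finset.mem_filter, Finset.mem_union, Finset.mem_univ, true_and]
    constructor
    · rintro ⟨hk, hf⟩
      rcases Nat.lt_succ_iff_lt_or_eq.mp hk with h | h
      · exact Or.inl ⟨h, hf⟩
      · exact Or.inr ⟨Fin.ext h, hf⟩
    · rintro (⟨hk, hf⟩ | ⟨hk, hf⟩)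
      · exact ⟨Nat.lt_succ_of_lt hk, hf⟩
      · subst hk; exact ⟨Nat.lt_succ_self m, hf⟩
  rw [hset, Finset.card_union_of_disjoint]
  · congr 1
    by_cases h : f ⟨m, hm⟩ = true
    · rw [if_pos h]
      have : (Finset.univ.filter fun k : Fin n => k = ⟨m, hm⟩ ∧ f k = true) = {⟨m, hm⟩} := by
        ext k
        simp only [Finset.mem_filter, Finset.mem_univ, true_and, Finset.mem_singleton]
        constructor
        · rintro ⟨hk, _⟩; exact hk
        · rintro rfl; exact ⟨rfl, h⟩
      rw [this, Finset.card_singleton]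
    · rw [if_neg h]
      have : (Finset.univ.filter fun k : Fin n => k = ⟨m, hm⟩ ∧ f k = true) = ∅ := by
        ext k
        simp only [Finset.mem_filter, Finset.mem_univ, true_and, Finset.notMem_empty, iff_false]
        rintro ⟨rfl, hf⟩; exact h hf
      rw [this, Finset.card_empty]
  · rw [Finset.disjoint_left]
    intro k hk hk'
    simp only [Finset.mem_filter, Finset.mem_univ, true_and] at hk hk'
    rcases hk' with ⟨rfl, _⟩
    exact absurd hk.1 (lt_irrefl m)

lemma upCnt_mono (f : Fin n → Bool) {m₁ m₂ : ℕ} (h : m₁ ≤ m₂) : upCnt f m₁ ≤ upCnt f m₂ := by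
  apply Finset.card_le_card
  intro k hk
  simp only [Finset.mem_filter, Finset.mem_univ, true_and] at *
  exact ⟨lt_of_lt_of_le hk.1 h, hk.2⟩

lemma upCnt_le_add (f : Fin n → Bool) (m₁ m₂ : ℕ) :
    upCnt f m₂ ≤ upCnt f m₁ + (m₂ - m₁) := by
  classical
  have hsub : (Finset.univ.filter fun k : Fin n => k.val < m₂ ∧ f k = true)
      ⊆ (Finset.univ.filter fun k : Fin n => k.val < m₁ ∧ f k = true) ∪
        (Finset.univ.filter fun k : Fin n => m₁ ≤ k.val ∧ k.val < m₂) := by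
    intro k hk
    simp only [Finset.mem_filter, Finset.mem_union, Finset.mem_univ, true_and] at *
    rcases lt_or_ge k.val m₁ with h | h
    · exact Or.inl ⟨h, hk.2⟩
    · exact Or.inr ⟨h, hk.1⟩
  calc upCnt f m₂ ≤ _ := Finset.card_le_card hsub
    _ ≤ _ + _ := Finset.card_union_le _ _
    _ ≤ upCnt f m₁ + (m₂ - m₁) := by
        gcongr
        · exact le_rfl
        · have := Finset.card_le_card_of_injOn (f := fun k : Fin n => k.val)
            (s := Finset.univ.filter fun k : Fin n => m₁ ≤ k.val ∧ k.val < m₂)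
            (t := Finset.Ico m₁ m₂)
            (fun k hk => by
              simp only [Finset.mem_coe, Finset.mem_filter, Finset.mem_univ, true_and] at hk
              exact Finset.mem_Ico.mpr hk)
            (Fin.val_injective.injOn)
          simpa [Nat.card_Ico] using this

lemma upCnt_total (f : Fin n → Bool) {m : ℕ} (h : n ≤ m) :
    upCnt f m = (Finset.univ.filter fun k : Fin n => f k = true).card := by
  unfold upCnt
  congr 1
  apply Finset.filter_congr
  intro k _
  simp [lt_of_lt_of_le k.isLt h]


def pathOf (a : ℤ) (f : Fin n → Bool) : Fin (n + 1) → ℤ :=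
  fun m => a + 2 * (upCnt f m.val : ℤ) - m.val

def signOf (ω : Fin (n + 1) → ℤ) : Fin n → Bool :=
  fun k => decide (ω k.succ = ω k.castSucc + 1)

lemma pathOf_zero (a : ℤ) (f : Fin n → Bool) : pathOf a f 0 = a := by
  simp [pathOf, upCnt_zero]

lemma pathOf_last (a : ℤ) (f : Fin n → Bool) :
    pathOf a f (Fin.last n) =
      a + 2 * ((Finset.univ.filter fun k : Fin n => f k = true).card : ℤ) - n := by
  simp [pathOf, upCnt_total f (le_refl n)]

lemma pathOf_step (a : ℤ) (f : Fin n → Bool) (k : Fin n) :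
    pathOf a f k.succ = pathOf a f k.castSucc + (if f k = true then 1 else -1) := by
  have h := upCnt_succ f k.val k.isLt
  simp only [pathOf, Fin.val_succ, Fin.coe_castSucc, h]
  have : (⟨k.val, k.isLt⟩ : Fin n) = k := rfl
  rw [this]
  by_cases hf : f k = true <;> simp [hf] <;> push_cast <;> ring

lemma pathOf_steps (a : ℤ) (f : Fin n → Bool) (k : Fin n) :
    |pathOf a f k.succ - pathOf a f k.castSucc| = 1 := by
  rw [pathOf_step]
  by_cases hf : f k = true <;> simp [hf]

lemma signOf_pathOf (a : ℤ) (f : Fin n → Bool) : signOf (pathOf a f) = f := by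
  funext k
  have h := pathOf_step a f k
  by_cases hf : f k = true
  · simp [signOf, hf] at h ⊢; omega
  · simp only [Bool.not_eq_true] at hf
    rw [hf] at h
    simp only [if_false, Bool.false_eq_true] at h
    simp only [signOf, hf]
    rw [decide_eq_false]
    omega

lemma path_eq (ω : Fin (n + 1) → ℤ) (hsteps : ∀ k : Fin n, |ω k.succ - ω k.castSucc| = 1) :
    ω = pathOf (ω 0) (signOf ω) := by
  funext m
  induction m using Fin.induction with
  | zero => rw [pathOf_zero]
  | succ k ih =>
    rw [pathOf_step, ← ih]
    by_cases hf : signOf ω k = true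
    · simp only [signOf, decide_eq_true_eq] at hf
      simp [signOf, hf]
    · simp only [signOf, decide_eq_true_eq] at hf
      have := hsteps k
      rw [abs_eq (by norm_num : (0:ℤ) ≤ 1)] at this
      rcases this with h | h
      · exact absurd (by omega) hf
      · simp [signOf, hf]
        omega


lemma filter_sign (ω : Fin (n + 1) → ℤ) :
    (Finset.univ.filter fun k : Fin n => signOf ω k = true)
      = (Finset.univ.filter fun k : Fin n => ω k.succ = ω k.castSucc + 1) := by
  apply Finset.filter_congr
  intro k _
  simp [signOf]

lemma endpoint_eq (ω : Fin (n + 1) → ℤ)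
    (hsteps : ∀ k : Fin n, |ω k.succ - ω k.castSucc| = 1) :
    ω (Fin.last n) = ω 0 +
      2 * (((Finset.univ.filter fun k : Fin n => ω k.succ = ω k.castSucc + 1)).card : ℤ) - n := by
  conv_lhs => rw [path_eq ω hsteps]
  rw [pathOf_last, ← filter_sign]

lemma count_signs (U : ℕ) :
    Set.ncard {f : Fin n → Bool | (Finset.univ.filter fun k => f k = true).card = U}
      = Nat.choose n U := by
  classical
  have hset : {f : Fin n → Bool | (Finset.univ.filter fun k => f k = true).card = U}
      = ↑(Finset.univ.filter fun f : Fin n → Bool =>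
          (Finset.univ.filter fun k => f k = true).card = U) := by
    ext f; simp
  rw [hset, Set.ncard_coe_finset]
  rw [show Nat.choose n U = (Finset.univ.powersetCard U : Finset (Finset (Fin n))).card by
    rw [Finset.card_powersetCard, Finset.card_univ, Fintype.card_fin]]
  refine Finset.card_bij' (fun f _ => Finset.univ.filter fun k => f k = true)
    (fun s _ => fun k => decide (k ∈ s)) ?_ ?_ ?_ ?_
  · intro f hf
    simp only [Finset.mem_filter, Finset.mem_univ, true_and] at hf
    simp [Finset.mem_powersetCard_univ, hf]
  · intro s hs
    simp only [Finset.mem_powersetCard_univ] at hs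
    simp only [Finset.mem_filter, Finset.mem_univ, true_and]
    rw [← hs]
    congr 1
    ext k
    simp
  · intro f _
    funext k
    simp
  · intro s _
    ext k
    simp

lemma count_paths (a b : ℤ) (U : ℕ) (hb : b = a + 2 * U - n) :
    Set.ncard {ω : Fin (n + 1) → ℤ | ω 0 = a ∧ ω (Fin.last n) = b ∧
        ∀ k : Fin n, |ω k.succ - ω k.castSucc| = 1} = Nat.choose n U := by
  have himg : {ω : Fin (n + 1) → ℤ | ω 0 = a ∧ ω (Fin.last n) = b ∧
        ∀ k : Fin n, |ω k.succ - ω k.castSucc| = 1}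
      = pathOf a '' {f : Fin n → Bool | (Finset.univ.filter fun k => f k = true).card = U} := by
    ext ω
    constructor
    · rintro ⟨h0, hl, hsteps⟩
      refine ⟨signOf ω, ?_, ?_⟩
      · have := endpoint_eq ω hsteps
        rw [h0, hl] at this
        rw [← filter_sign] at this
        simp only [Set.mem_setOf_eq]
        omega
      · rw [← h0]; exact (path_eq ω hsteps).symm
    · rintro ⟨f, hf, rfl⟩
      simp only [Set.mem_setOf_eq] at hf
      refine ⟨pathOf_zero a f, ?_, pathOf_steps a f⟩
      rw [pathOf_last, hf, hb]
  rw [himg, Set.ncard_image_of_injOn, count_signs]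
  intro f _ g _ hfg
  have : signOf (pathOf a f) = signOf (pathOf a g) := by rw [hfg]
  rwa [signOf_pathOf, signOf_pathOf] at this



variable {n : ℕ} {l : ℤ}

def hits (l : ℤ) (ω : Fin (n + 1) → ℤ) : Finset (Fin (n + 1)) :=
  Finset.univ.filter fun m => ω m = l

noncomputable def reflAt (l : ℤ) (ω : Fin (n + 1) → ℤ) : Fin (n + 1) → ℤ :=
  if h : (hits l ω).Nonempty then
    fun k => if k ≤ (hits l ω).min' h then 2 * l - ω k else ω k
  else ω

lemma hits_nonempty {ω : Fin (n + 1) → ℤ} (h : ∃ m, ω m = l) : (hits l ω).Nonempty := by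
  obtain ⟨m, hm⟩ := h
  exact ⟨m, by simp [hits, hm]⟩

lemma min'_hit {ω : Fin (n + 1) → ℤ} (h : (hits l ω).Nonempty) : ω ((hits l ω).min' h) = l := by
  have := Finset.min'_mem (hits l ω) h
  simpa [hits] using this

lemma mem_hits {ω : Fin (n + 1) → ℤ} {m : Fin (n + 1)} : m ∈ hits l ω ↔ ω m = l := by
  simp [hits]

lemma reflAt_apply_le {ω : Fin (n + 1) → ℤ} (h : (hits l ω).Nonempty) (k : Fin (n + 1))
    (hk : k ≤ (hits l ω).min' h) : reflAt l ω k = 2 * l - ω k := by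
  unfold reflAt; rw [dif_pos h, if_pos hk]

lemma reflAt_apply_gt {ω : Fin (n + 1) → ℤ} (h : (hits l ω).Nonempty) (k : Fin (n + 1))
    (hk : ¬ k ≤ (hits l ω).min' h) : reflAt l ω k = ω k := by
  unfold reflAt; rw [dif_pos h, if_neg hk]

lemma hits_reflAt (ω : Fin (n + 1) → ℤ) : hits l (reflAt l ω) = hits l ω := by
  by_cases h : (hits l ω).Nonempty
  · ext m
    rw [mem_hits, mem_hits]
    by_cases hm : m ≤ (hits l ω).min' h
    · rw [reflAt_apply_le h m hm]; omega
    · rw [reflAt_apply_gt h m hm]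
  · unfold reflAt
    rw [dif_neg h]

lemma reflAt_reflAt (ω : Fin (n + 1) → ℤ) : reflAt l (reflAt l ω) = ω := by
  by_cases h : (hits l ω).Nonempty
  · have h2 : (hits l (reflAt l ω)).Nonempty := by rw [hits_reflAt]; exact h
    have hmin : (hits l (reflAt l ω)).min' h2 = (hits l ω).min' h := by
      congr 1 <;> rw [hits_reflAt]
    funext k
    by_cases hk : k ≤ (hits l ω).min' h
    · rw [reflAt_apply_le h2 k (by rw [hmin]; exact hk), reflAt_apply_le h k hk]
      ring
    · rw [reflAt_apply_gt h2 k (by rw [hmin]; exact hk), reflAt_apply_gt h k hk]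
  · have : reflAt l ω = ω := dif_neg h
    rw [this, this]

lemma reflAt_zero {ω : Fin (n + 1) → ℤ} (h : (hits l ω).Nonempty) :
    reflAt l ω 0 = 2 * l - ω 0 :=
  reflAt_apply_le h 0 (Fin.zero_le _)

lemma reflAt_last {ω : Fin (n + 1) → ℤ} (h : (hits l ω).Nonempty)
    (hne : ω (Fin.last n) ≠ l) : reflAt l ω (Fin.last n) = ω (Fin.last n) := by
  apply reflAt_apply_gt h
  intro hle
  have heq : (hits l ω).min' h = Fin.last n := le_antisymm (Fin.le_last _) hle
  exact hne (heq ▸ min'_hit h)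

lemma reflAt_steps {ω : Fin (n + 1) → ℤ}
    (hsteps : ∀ k : Fin n, |ω k.succ - ω k.castSucc| = 1) (k : Fin n) :
    |reflAt l ω k.succ - reflAt l ω k.castSucc| = 1 := by
  by_cases h : (hits l ω).Nonempty
  · set T := (hits l ω).min' h with hT
    by_cases h1 : k.succ ≤ T
    · have h2 : k.castSucc ≤ T := le_trans (Fin.castSucc_lt_succ (i := k)).le h1
      rw [reflAt_apply_le h _ h1, reflAt_apply_le h _ h2]
      rw [show 2*l - ω k.succ - (2*l - ω k.castSucc) = -(ω k.succ - ω k.castSucc) by ring,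
        abs_neg]
      exact hsteps k
    · by_cases h2 : k.castSucc ≤ T
      · have hTk : T = k.castSucc := by
          apply le_antisymm _ h2
          simp only [Fin.le_def, Fin.lt_def] at *
          simp only [Fin.val_succ, Fin.coe_castSucc] at *
          omega
        have hωc : ω k.castSucc = l := by rw [← hTk]; exact min'_hit h
        rw [reflAt_apply_gt h _ h1, reflAt_apply_le h _ h2, hωc]
        rw [show 2*l - l = l from by ring, ← hωc]
        exact hsteps k
      · rw [reflAt_apply_gt h _ h1, reflAt_apply_gt h _ h2]
        exact hsteps k
  · unfold reflAt
    rw [dif_neg h]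
    exact hsteps k

lemma exists_hit {ω : Fin (n + 1) → ℤ}
    (hsteps : ∀ k : Fin n, |ω k.succ - ω k.castSucc| = 1)
    (h0 : ω 0 ≤ l) (h1 : l ≤ ω (Fin.last n)) : ∃ m, ω m = l := by
  classical
  set s : Finset (Fin (n + 1)) := Finset.univ.filter fun m => l ≤ ω m with hs
  have hne : s.Nonempty := ⟨Fin.last n, by simp [hs, h1]⟩
  set M := s.min' hne with hM
  have hMl : l ≤ ω M := by
    have := Finset.min'_mem s hne
    simpa [hs] using this
  rcases Nat.eq_zero_or_pos M.val with h | h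
  · have : M = 0 := Fin.ext h
    rw [this] at hMl
    exact ⟨0, le_antisymm h0 hMl⟩
  · obtain ⟨v, hv⟩ := Nat.exists_eq_succ_of_ne_zero (by omega : M.val ≠ 0)
    have hvn : v < n := by have := M.isLt; omega
    set k : Fin n := ⟨v, hvn⟩ with hk
    have hksucc : k.succ = M := Fin.ext (by simp [hk, hv])
    have hkc : ¬ l ≤ ω k.castSucc := by
      intro hc
      have : M ≤ k.castSucc := Finset.min'_le s _ (by simp [hs, hc])
      simp only [← hksucc, Fin.le_def, Fin.val_succ, Fin.coe_castSucc] at this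
      omega
    have := hsteps k
    rw [hksucc] at this
    rw [abs_eq (by norm_num : (0:ℤ) ≤ 1)] at this
    refine ⟨M, ?_⟩
    push_neg at hkc
    omega


lemma hit_bound (ω : Fin (n + 1) → ℤ)
    (hsteps : ∀ k : Fin n, |ω k.succ - ω k.castSucc| = 1)
    (m : Fin (n + 1)) (hit : ω m = l) :
    ω (Fin.last n) - l ≤
      ((Finset.univ.filter fun k : Fin n => ω k.succ = ω k.castSucc + 1).card : ℤ) := by
  have hω := path_eq ω hsteps
  set f := signOf ω with hf
  have e1 : ω (Fin.last n) = ω 0 + 2 * (upCnt f n : ℤ) - n := by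
    conv_lhs => rw [hω]
    simp [pathOf]
  have e2 : ω m = ω 0 + 2 * (upCnt f m.val : ℤ) - m.val := by
    conv_lhs => rw [hω]
    rfl
  have h3 : upCnt f n ≤ upCnt f m.val + (n - m.val) := upCnt_le_add f m.val n
  have h4 : upCnt f m.val ≤ upCnt f n := upCnt_mono f (by omega)
  have h5 : (Finset.univ.filter fun k : Fin n => ω k.succ = ω k.castSucc + 1).card
      = upCnt f n := by
    rw [← filter_sign, upCnt_total f (le_refl n)]
  have hm : m.val ≤ n := by omega
  rw [h5]
  omega

end ReflAux

open ReflAux in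
/-- Reflection principle, lower bound: if `i > l` and `j > l`, then when `B + l ≥ j`
the number of integer grid bridges from `i` to `j` with `B` upward jumps attaining
the value `l` equals `C(K, B_l)` with `B_l = B + l - j = B - (j - l)`; and when
`B + l < j` no bridge attains the value `l`. -/
theorem reflection_lower_count (i j l : ℤ) (B D : ℕ) (hj : j = i + B - D)
    (hil : l < i) (hjl : l < j) :
    (j ≤ (B : ℤ) + l →
      Set.ncard {ω : Fin (B + D + 1) → ℤ |
          IsBridge i j B D ω ∧ ∃ k : Fin (B + D + 1), ω k = l}
        = Nat.choose (B + D) (B - (j - l).toNat)) ∧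
    ((B : ℤ) + l < j →
      {ω : Fin (B + D + 1) → ℤ |
          IsBridge i j B D ω ∧ ∃ k : Fin (B + D + 1), ω k = l} = ∅) := by
  classical
  have hAchar : {ω : Fin (B + D + 1) → ℤ |
        IsBridge i j B D ω ∧ ∃ k : Fin (B + D + 1), ω k = l}
      = {ω : Fin (B + D + 1) → ℤ | (ω 0 = i ∧ ω (Fin.last (B + D)) = j ∧
          ∀ k : Fin (B + D), |ω k.succ - ω k.castSucc| = 1) ∧
          ∃ k : Fin (B + D + 1), ω k = l} := by
    ext ω
    simp only [Set.mem_setOf_eq, IsBridge]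
    constructor
    · rintro ⟨⟨h0, hlast, hs, _⟩, hhit⟩
      exact ⟨⟨h0, hlast, hs⟩, hhit⟩
    · rintro ⟨⟨h0, hlast, hs⟩, hhit⟩
      refine ⟨⟨h0, hlast, hs, ?_⟩, hhit⟩
      have := endpoint_eq ω hs
      rw [h0, hlast] at this
      omega
  constructor
  · intro hle
    rw [hAchar]
    have key : reflAt l '' {ω : Fin (B + D + 1) → ℤ | (ω 0 = i ∧ ω (Fin.last (B + D)) = j ∧
          ∀ k : Fin (B + D), |ω k.succ - ω k.castSucc| = 1) ∧
          ∃ k : Fin (B + D + 1), ω k = l}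
        = {ω : Fin (B + D + 1) → ℤ | ω 0 = 2 * l - i ∧ ω (Fin.last (B + D)) = j ∧
            ∀ k : Fin (B + D), |ω k.succ - ω k.castSucc| = 1} := by
      ext ω'
      constructor
      · rintro ⟨ω, ⟨⟨h0, hlast, hs⟩, hhit⟩, rfl⟩
        have hne := hits_nonempty hhit
        refine ⟨?_, ?_, fun k => reflAt_steps hs k⟩
        · rw [reflAt_zero hne, h0]
        · rw [reflAt_last hne (by rw [hlast]; omega)]
          exact hlast
      · rintro ⟨h0, hlast, hs⟩
        have hhit' : ∃ m, ω' m = l :=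
          exists_hit hs (by rw [h0]; omega) (by rw [hlast]; omega)
        have hne' := hits_nonempty hhit'
        refine ⟨reflAt l ω', ⟨⟨?_, ?_, fun k => reflAt_steps hs k⟩, ?_⟩, reflAt_reflAt ω'⟩
        · rw [reflAt_zero hne', h0]; ring
        · rw [reflAt_last hne' (by rw [hlast]; omega)]
          exact hlast
        · have hne2 : (hits l (reflAt l ω')).Nonempty := by
            rw [hits_reflAt]; exact hne'
          obtain ⟨m, hm⟩ := hne2
          exact ⟨m, mem_hits.mp hm⟩
    have hinj : Set.InjOn (reflAt l)
        {ω : Fin (B + D + 1) → ℤ | (ω 0 = i ∧ ω (Fin.last (B + D)) = j ∧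
          ∀ k : Fin (B + D), |ω k.succ - ω k.castSucc| = 1) ∧
          ∃ k : Fin (B + D + 1), ω k = l} := by
      intro a _ b _ hab
      have := congrArg (reflAt l) hab
      rwa [reflAt_reflAt, reflAt_reflAt] at this
    rw [← Set.ncard_image_of_injOn hinj, key]
    have ht : ((j - l).toNat : ℤ) = j - l := Int.toNat_of_nonneg (by omega)
    rw [count_paths (2 * l - i) j (D + (j - l).toNat) (by push_cast; omega)]
    have h1 : (j - l).toNat ≤ B := by omega
    rw [show B - (j - l).toNat = (B + D) - (D + (j - l).toNat) from by omega]
    exact (Nat.choose_symm (show D + (j - l).toNat ≤ B + D by omega)).symm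
  · intro hlt
    apply Set.eq_empty_iff_forall_notMem.mpr
    rintro ω ⟨⟨h0, hlast, hs, hcard⟩, m, hm⟩
    have hb := hit_bound ω hs m hm
    rw [hlast, hcard] at hb
    omega
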